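/- arXiv:1811.04425 — 4 statements merged into one kernel-verified Lean document; each statement's English description precedes it below -/
import Mathlib

section
/- Let G be a finite simple graph with arboricity at most α, and let n_t denote the number of t-cliques in G. Then for every t ≥ 2, n_t ≤ (2α/t)·n_{t-1}. -/
open Finset SimpleGraph

/-- The number of ordered adjacent pairs inside a vertex set `S` is twice the number of
edges inside `S`, hence at most `2 * α * #S` under the arboricity hypothesis. -/
lemma pairs_in_le {V : Type*} [Fintype V] [DecidableEq V]
    (G : SimpleGraph V) [DecidableRel G.Adj] (α : ℕ)
    (harb : ∀ S : Finset V,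
      (G.edgeFinset.filter (fun e => ∀ v ∈ e, v ∈ S)).card ≤ α * S.card)
    (S : Finset V) :
    (Finset.univ.filter fun p : V × V => G.Adj p.1 p.2 ∧ p.1 ∈ S ∧ p.2 ∈ S).card
      ≤ 2 * (α * S.card) := by
  let H : SimpleGraph V :=
    { Adj := fun u v => G.Adj u v ∧ u ∈ S ∧ v ∈ S
      symm := by
        constructor
        intro u v h
        exact ⟨h.1.symm, h.2.2, h.2.1⟩
      loopless := by
        constructor
        intro u h
        exact G.loopless.irrefl u h.1 }
  letI : DecidableRel H.Adj := fun u v =>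
    inferInstanceAs (Decidable (G.Adj u v ∧ u ∈ S ∧ v ∈ S))
  have hedge : H.edgeFinset = G.edgeFinset.filter (fun e => ∀ v ∈ e, v ∈ S) := by
    ext e
    induction e with
    | h a b =>
      simp only [mem_edgeFinset, mem_filter, SimpleGraph.mem_edgeSet, Sym2.mem_iff]
      constructor
      · rintro ⟨h1, h2, h3⟩
        exact ⟨h1, fun v hv => by rcases hv with rfl | rfl <;> assumption⟩
      · rintro ⟨h1, h2⟩
        exact ⟨h1, h2 a (Or.inl rfl), h2 b (Or.inr rfl)⟩
  have hcard : (Finset.univ.filter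
      fun p : V × V => G.Adj p.1 p.2 ∧ p.1 ∈ S ∧ p.2 ∈ S).card
      = 2 * H.edgeFinset.card := by
    rw [H.two_mul_card_edgeFinset]
  have hle : 2 * H.edgeFinset.card ≤ 2 * (α * S.card) := by
    rw [hedge]
    exact Nat.mul_le_mul_left 2 (harb S)
  exact hcard.trans_le hle

/-- If `G` has arboricity at most `α` (every vertex subset `S` spans at most
`α·|S|` edges), then for every `t ≥ 2` the number of `t`-cliques satisfies
`n_t ≤ (2α/t)·n_{t-1}`. -/
theorem clique_count_step {V : Type*} [Fintype V] [DecidableEq V]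
    (G : SimpleGraph V) [DecidableRel G.Adj] (α t : ℕ) (ht : 2 ≤ t)
    (harb : ∀ S : Finset V,
      (G.edgeFinset.filter (fun e => ∀ v ∈ e, v ∈ S)).card ≤ α * S.card) :
    ((G.cliqueFinset t).card : ℝ)
      ≤ (2 * α / t) * (G.cliqueFinset (t - 1)).card := by
  obtain ⟨k, rfl⟩ : ∃ k, t = k + 2 := ⟨t - 2, by omega⟩
  have hts : k + 2 - 1 = k + 1 := rfl
  rw [hts]
  set A := G.cliqueFinset (k + 2) with hA
  set B := G.cliqueFinset (k + 1) with hB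
  set C := G.cliqueFinset k with hC
  set SJ : Finset V → Finset V :=
    fun J => Finset.univ.filter (fun v => v ∉ J ∧ insert v J ∈ B) with hSJ
  -- Step 1: count (K, ordered pair in K)
  have step1 : (A.sigma fun K => K.offDiag).card = A.card * ((k + 2) * (k + 1)) := by
    rw [Finset.card_sigma]
    rw [Finset.sum_congr rfl (fun K hK => ?_), Finset.sum_const, smul_eq_mul]
    rw [Finset.offDiag_card]
    have : K.card = k + 2 := (mem_cliqueFinset_iff.mp hK).2
    rw [this]; ring_nf; omega
  -- key set-manipulation facts
  have fact1 : ∀ (K : Finset V) (u v : V), u ∈ K → v ∈ K →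
      insert u (insert v (K \ {u, v})) = K := by
    intro K u v hu hv
    ext w
    simp only [Finset.mem_insert, Finset.mem_sdiff, Finset.mem_insert,
      Finset.mem_singleton]
    constructor
    · rintro (rfl | rfl | ⟨h, _⟩) <;> assumption
    · intro hw
      by_cases h1 : w = u
      · exact Or.inl h1
      by_cases h2 : w = v
      · exact Or.inr (Or.inl h2)
      · exact Or.inr (Or.inr ⟨hw, fun h => h.elim h1 h2⟩)
  have fact2 : ∀ (J : Finset V) (u v : V), u ∉ J → v ∉ J →
      insert u (insert v J) \ {u, v} = J := by
    intro J u v hu hv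
    ext w
    simp only [Finset.mem_sdiff, Finset.mem_insert, Finset.mem_singleton]
    constructor
    · rintro ⟨rfl | rfl | hw, h⟩
      · exact absurd (Or.inl rfl) h
      · exact absurd (Or.inr rfl) h
      · exact hw
    · intro hw
      refine ⟨Or.inr (Or.inr hw), ?_⟩
      rintro (rfl | rfl)
      · exact hu hw
      · exact hv hw
  -- Step 2: bijection with (J, ordered pair extending J to a (k+2)-clique)
  have step2 : (A.sigma fun K => K.offDiag).card
      = (C.sigma fun J => Finset.univ.filter
          (fun p : V × V => G.Adj p.1 p.2 ∧ p.1 ∉ J ∧ p.2 ∉ J ∧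
            insert p.1 (insert p.2 J) ∈ A)).card := by
    refine Finset.card_bij' (fun x _ => ⟨x.1 \ {x.2.1, x.2.2}, x.2⟩)
      (fun x _ => ⟨insert x.2.1 (insert x.2.2 x.1), x.2⟩) ?hi ?hj ?left ?right
    case hi =>
      rintro ⟨K, u, v⟩ hx
      simp only [Finset.mem_sigma, Finset.mem_offDiag] at hx
      obtain ⟨hK, hu, hv, huv⟩ := hx
      obtain ⟨hKc, hKcard⟩ := mem_cliqueFinset_iff.mp hK
      dsimp only
      refine Finset.mem_sigma.mpr ⟨?_, Finset.mem_filter.mpr ⟨Finset.mem_univ _,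
        hKc hu hv huv, ?_, ?_, ?_⟩⟩
      · rw [hC, mem_cliqueFinset_iff, isNClique_iff]
        refine ⟨hKc.subset Finset.sdiff_subset, ?_⟩
        rw [Finset.card_sdiff_of_subset (by
          intro w hw
          rcases Finset.mem_insert.mp hw with rfl | hw
          · exact hu
          · rw [Finset.mem_singleton] at hw; subst hw; exact hv)]
        rw [Finset.card_insert_of_notMem (by simp [huv]), Finset.card_singleton, hKcard]
        omega
      · simp
      · simp
      · rw [fact1 K u v hu hv]; exact hK
    case hj =>
      rintro ⟨J, u, v⟩ hx
      simp only [Finset.mem_sigma, Finset.mem_filter, Finset.mem_univ, true_and] at hx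
      obtain ⟨hJ, hadj, hu, hv, hins⟩ := hx
      dsimp only
      refine Finset.mem_sigma.mpr ⟨hins, Finset.mem_offDiag.mpr
        ⟨Finset.mem_insert_self _ _,
         Finset.mem_insert_of_mem (Finset.mem_insert_self _ _), hadj.ne⟩⟩
    case left =>
      rintro ⟨K, u, v⟩ hx
      simp only [Finset.mem_sigma, Finset.mem_offDiag] at hx
      obtain ⟨hK, hu, hv, huv⟩ := hx
      dsimp only
      rw [fact1 K u v hu hv]
    case right =>
      rintro ⟨J, u, v⟩ hx
      simp only [Finset.mem_sigma, Finset.mem_filter, Finset.mem_univ, true_and] at hx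
      obtain ⟨hJ, hadj, hu, hv, hins⟩ := hx
      dsimp only
      rw [fact2 J u v hu hv]
  -- Step 3: for each J, the extending pairs are adjacent pairs inside SJ J
  have step3 : ∀ J ∈ C, (Finset.univ.filter
      (fun p : V × V => G.Adj p.1 p.2 ∧ p.1 ∉ J ∧ p.2 ∉ J ∧
        insert p.1 (insert p.2 J) ∈ A)).card ≤ 2 * (α * (SJ J).card) := by
    intro J hJ
    refine le_trans (Finset.card_le_card ?_) (pairs_in_le G α harb (SJ J))
    intro p hp
    rw [Finset.mem_filter] at hp ⊢
    obtain ⟨-, hadj, hu, hv, hins⟩ := hp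
    obtain ⟨hKc, hKcard⟩ := mem_cliqueFinset_iff.mp hins
    obtain ⟨hJc, hJcard⟩ := mem_cliqueFinset_iff.mp hJ
    refine ⟨Finset.mem_univ _, hadj, ?_, ?_⟩
    · rw [hSJ]
      refine Finset.mem_filter.mpr ⟨Finset.mem_univ _, hu, ?_⟩
      rw [hB, mem_cliqueFinset_iff, isNClique_iff]
      refine ⟨hKc.subset ?_, by rw [Finset.card_insert_of_notMem hu, hJcard]⟩
      intro w hw
      rcases Finset.mem_insert.mp hw with rfl | hw
      · simp
      · simp [hw]
    · rw [hSJ]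
      refine Finset.mem_filter.mpr ⟨Finset.mem_univ _, hv, ?_⟩
      rw [hB, mem_cliqueFinset_iff, isNClique_iff]
      refine ⟨hKc.subset ?_, by rw [Finset.card_insert_of_notMem hv, hJcard]⟩
      intro w hw
      rcases Finset.mem_insert.mp hw with rfl | hw
      · simp
      · simp [hw]
  -- Step 4: sum of |SJ J| over J ∈ C equals (k+1) * |B|
  have step4 : (∑ J ∈ C, (SJ J).card) = B.card * (k + 1) := by
    rw [← Finset.card_sigma]
    rw [show B.card * (k + 1) = (B.sigma fun K => K).card by
      rw [Finset.card_sigma]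
      rw [Finset.sum_congr rfl (fun K hK => (mem_cliqueFinset_iff.mp hK).2),
        Finset.sum_const, smul_eq_mul]]
    refine Finset.card_bij' (fun x _ => ⟨insert x.2 x.1, x.2⟩)
      (fun x _ => ⟨x.1.erase x.2, x.2⟩) ?hi ?hj ?left ?right
    case hi =>
      rintro ⟨J, v⟩ hx
      simp only [Finset.mem_sigma, hSJ, Finset.mem_filter, Finset.mem_univ, true_and] at hx
      dsimp only
      exact Finset.mem_sigma.mpr ⟨hx.2.2, Finset.mem_insert_self _ _⟩
    case hj =>
      rintro ⟨K, v⟩ hx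
      simp only [Finset.mem_sigma] at hx
      obtain ⟨hK, hv⟩ := hx
      obtain ⟨hKc, hKcard⟩ := mem_cliqueFinset_iff.mp hK
      dsimp only
      refine Finset.mem_sigma.mpr ⟨?_, ?_⟩
      · rw [hC, mem_cliqueFinset_iff, isNClique_iff]
        exact ⟨hKc.subset (Finset.erase_subset _ _), by
          rw [Finset.card_erase_of_mem hv, hKcard]; omega⟩
      · rw [hSJ]
        refine Finset.mem_filter.mpr ⟨Finset.mem_univ _, Finset.notMem_erase _ _, ?_⟩
        rw [Finset.insert_erase hv]; exact hK
    case left =>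
      rintro ⟨J, v⟩ hx
      simp only [Finset.mem_sigma, hSJ, Finset.mem_filter, Finset.mem_univ, true_and] at hx
      dsimp only
      rw [Finset.erase_insert hx.2.1]
    case right =>
      rintro ⟨K, v⟩ hx
      simp only [Finset.mem_sigma] at hx
      dsimp only
      rw [Finset.insert_erase hx.2]
  -- Put everything together in ℕ
  have main : A.card * ((k + 2) * (k + 1)) ≤ 2 * α * (B.card * (k + 1)) := by
    rw [← step1, step2, Finset.card_sigma]
    calc (∑ J ∈ C, (Finset.univ.filter
        (fun p : V × V => G.Adj p.1 p.2 ∧ p.1 ∉ J ∧ p.2 ∉ J ∧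
          insert p.1 (insert p.2 J) ∈ A)).card)
        ≤ ∑ J ∈ C, 2 * (α * (SJ J).card) := Finset.sum_le_sum step3
      _ = 2 * α * ∑ J ∈ C, (SJ J).card := by
          rw [Finset.mul_sum]; congr 1; ext J; ring
      _ = 2 * α * (B.card * (k + 1)) := by rw [step4]
  have main2 : A.card * (k + 2) ≤ 2 * α * B.card := by
    nlinarith [main]
  -- Conclude over ℝ
  rw [div_mul_eq_mul_div, le_div_iff₀ (by push_cast; positivity)]
  calc (A.card : ℝ) * ((k + 2 : ℕ) : ℝ) = ((A.card * (k + 2) : ℕ) : ℝ) := by push_cast; ring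
    _ ≤ ((2 * α * B.card : ℕ) : ℝ) := by exact_mod_cast main2
    _ = 2 * (α : ℝ) * B.card := by push_cast; ring
end

section
/- Let G be a finite simple graph with arboricity at most α, let n_t denote the number of t-cliques. For every 1 ≤ t < k, n_k ≤ (t!/k!)·n_t·(2α)^{k-t}. -/
open Finset

private lemma arb_orientation {V : Type*} [Fintype V] [DecidableEq V]
    (G : SimpleGraph V) [DecidableRel G.Adj] (α : ℕ)
    (harb : ∀ S : Finset V,
      (G.edgeFinset.filter (fun e => ∀ v ∈ e, v ∈ S)).card ≤ α * S.card) :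
    ∃ f : Sym2 V → V, (∀ e ∈ G.edgeFinset, f e ∈ e) ∧
      ∀ v : V, (G.edgeFinset.filter (fun e => f e = v)).card ≤ α := by
  classical
  set t : {e // e ∈ G.edgeFinset} → Finset (V × Fin α) :=
    fun e => (Finset.univ.filter (fun v => v ∈ (e : Sym2 V))) ×ˢ Finset.univ with ht
  have hall : ∀ s : Finset {e // e ∈ G.edgeFinset}, s.card ≤ (s.biUnion t).card := by
    intro s
    set S : Finset V := Finset.univ.filter (fun v => ∃ e ∈ s, v ∈ (e : Sym2 V)) with hS
    have hb : s.biUnion t = S ×ˢ (Finset.univ : Finset (Fin α)) := by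
      ext ⟨v, i⟩
      simp only [ht, hS, Finset.mem_biUnion, Finset.mem_product, Finset.mem_filter,
        Finset.mem_univ, true_and, and_true]
    have h1 : s.card ≤ (G.edgeFinset.filter (fun e => ∀ v ∈ e, v ∈ S)).card := by
      have hsub : s.image Subtype.val ⊆ G.edgeFinset.filter (fun e => ∀ v ∈ e, v ∈ S) := by
        intro e he
        simp only [Finset.mem_image] at he
        obtain ⟨⟨e', he'⟩, hes, rfl⟩ := he
        refine Finset.mem_filter.2 ⟨he', fun v hv => ?_⟩
        simp only [hS, Finset.mem_filter, Finset.mem_univ, true_and]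
        exact ⟨⟨e', he'⟩, hes, hv⟩
      calc s.card = (s.image Subtype.val).card :=
            (Finset.card_image_of_injective _ Subtype.val_injective).symm
        _ ≤ _ := Finset.card_le_card hsub
    rw [hb, Finset.card_product]
    simpa [Finset.card_univ, mul_comm] using h1.trans (harb S)
  obtain ⟨g, hginj, hgt⟩ := (Finset.all_card_le_biUnion_card_iff_exists_injective t).1 hall
  have hgfst : ∀ (e : Sym2 V) (he : e ∈ G.edgeFinset), (g ⟨e, he⟩).1 ∈ e := by
    intro e he
    have := hgt ⟨e, he⟩
    simp only [ht, Finset.mem_product, Finset.mem_filter, Finset.mem_univ, true_and] at this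
    exact this.1
  refine ⟨fun e => if he : e ∈ G.edgeFinset then (g ⟨e, he⟩).1 else e.out.1, ?_, ?_⟩
  · intro e he
    simp only [he, dif_pos]
    exact hgfst e he
  · intro v
    have : ∀ e ∈ G.edgeFinset.filter (fun e =>
        (if he : e ∈ G.edgeFinset then (g ⟨e, he⟩).1 else e.out.1) = v),
        (fun e => if he : e ∈ G.edgeFinset then ((g ⟨e, he⟩).2 : ℕ) else 0) e ∈
          Finset.range α := by
      intro e he
      rw [Finset.mem_filter] at he
      simp only [he.1, dif_pos]
      exact Finset.mem_range.2 (g ⟨e, he.1⟩).2.isLt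
    have hinj : Set.InjOn (fun e => if he : e ∈ G.edgeFinset then ((g ⟨e, he⟩).2 : ℕ) else 0)
        (G.edgeFinset.filter (fun e =>
          (if he : e ∈ G.edgeFinset then (g ⟨e, he⟩).1 else e.out.1) = v)) := by
      intro e1 h1 e2 h2 heq
      simp only [Finset.coe_filter, Set.mem_setOf_eq] at h1 h2
      obtain ⟨he1, hv1⟩ := h1
      obtain ⟨he2, hv2⟩ := h2
      simp only [he1, he2, dif_pos] at heq hv1 hv2
      have h2nd : (g ⟨e1, he1⟩).2 = (g ⟨e2, he2⟩).2 := Fin.val_injective heq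
      have : g ⟨e1, he1⟩ = g ⟨e2, he2⟩ := Prod.ext (hv1.trans hv2.symm) h2nd
      exact congrArg Subtype.val (hginj this)
    calc (G.edgeFinset.filter _).card ≤ (Finset.range α).card :=
          Finset.card_le_card_of_injOn _ this hinj
      _ = α := Finset.card_range α

private lemma step_bound {V : Type*} [Fintype V] [DecidableEq V]
    (G : SimpleGraph V) [DecidableRel G.Adj] (α : ℕ)
    (harb : ∀ S : Finset V,
      (G.edgeFinset.filter (fun e => ∀ v ∈ e, v ∈ S)).card ≤ α * S.card)
    (r : ℕ) (hr : 1 ≤ r) :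
    (r + 1) * (G.cliqueFinset (r + 1)).card ≤ 2 * α * (G.cliqueFinset r).card := by
  classical
  obtain ⟨f, hfmem, hdeg⟩ := arb_orientation G α harb
  set ext : Finset V → Finset V :=
    fun T => Finset.univ.filter (fun v => v ∉ T ∧ insert v T ∈ G.cliqueFinset (r + 1)) with hext
  set W : Finset V → V → ℕ := fun T v => (T.filter (fun u => f s(u, v) = u)).card with hW
  -- Key 1 : within each clique, twice the oriented count is (r+1)*r
  have key1 : ∀ K ∈ G.cliqueFinset (r + 1), 2 * ∑ v ∈ K, W (K.erase v) v = (r + 1) * r := by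
    intro K hK
    rw [SimpleGraph.mem_cliqueFinset_iff] at hK
    have hcard : K.card = r + 1 := hK.2
    have hA : ∀ v, W (K.erase v) v
        = ∑ u ∈ K, (if u ≠ v then (if f s(u, v) = u then 1 else 0) else 0) := by
      intro v
      simp only [hW]
      rw [Finset.card_filter, ← Finset.filter_ne', Finset.sum_filter]
    have hB : ∀ v, ((K.erase v).filter (fun u => f s(u, v) = v)).card
        = ∑ u ∈ K, (if u ≠ v then (if f s(u, v) = v then 1 else 0) else 0) := by
      intro v
      rw [Finset.card_filter, ← Finset.filter_ne', Finset.sum_filter]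
    have hswap : ∑ v ∈ K, W (K.erase v) v
        = ∑ v ∈ K, ((K.erase v).filter (fun u => f s(u, v) = v)).card := by
      calc ∑ v ∈ K, W (K.erase v) v
          = ∑ v ∈ K, ∑ u ∈ K, (if u ≠ v then (if f s(u, v) = u then 1 else 0) else 0) :=
            Finset.sum_congr rfl fun v _ => hA v
        _ = ∑ v ∈ K, ∑ u ∈ K, (if u ≠ v then (if f s(u, v) = v then 1 else 0) else 0) := by
            rw [Finset.sum_comm]
            refine Finset.sum_congr rfl fun a _ => Finset.sum_congr rfl fun b _ => ?_
            rcases eq_or_ne a b with h | h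
            · simp [h]
            · have hs : s(a, b) = s(b, a) := Sym2.eq_swap
              simp [h, Ne.symm h, hs]
        _ = ∑ v ∈ K, ((K.erase v).filter (fun u => f s(u, v) = v)).card :=
            Finset.sum_congr rfl fun v _ => (hB v).symm
    have hpart : ∀ v ∈ K, W (K.erase v) v
        + ((K.erase v).filter (fun u => f s(u, v) = v)).card = r := by
      intro v hv
      have hsplit : (K.erase v).filter (fun u => f s(u, v) = v)
          = (K.erase v).filter (fun u => ¬ (f s(u, v) = u)) := by
        refine Finset.filter_congr fun u hu => ?_
        have huv : u ≠ v := Finset.ne_of_mem_erase hu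
        have hadj' : G.Adj u v := hK.1 (Finset.mem_of_mem_erase hu) hv huv
        have hedge : s(u, v) ∈ G.edgeFinset := by
          rw [SimpleGraph.mem_edgeFinset, SimpleGraph.mem_edgeSet]
          exact hadj'
        have hm := hfmem _ hedge
        rw [Sym2.mem_iff] at hm
        constructor
        · intro h1 h2
          exact huv (h2.symm.trans h1)
        · intro h1
          rcases hm with h | h
          · exact absurd h h1
          · exact h
      simp only [hW]
      rw [hsplit, Finset.card_filter_add_card_filter_not,
        Finset.card_erase_of_mem hv, hcard]
      omega
    calc 2 * ∑ v ∈ K, W (K.erase v) v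
        = ∑ v ∈ K, W (K.erase v) v
          + ∑ v ∈ K, ((K.erase v).filter (fun u => f s(u, v) = v)).card := by
          rw [← hswap]; ring
      _ = ∑ v ∈ K, (W (K.erase v) v
          + ((K.erase v).filter (fun u => f s(u, v) = v)).card) := (Finset.sum_add_distrib).symm
      _ = ∑ _v ∈ K, r := Finset.sum_congr rfl hpart
      _ = (r + 1) * r := by rw [Finset.sum_const, hcard, smul_eq_mul]
  -- Key 2 : reindex the double sum
  have key2 : ∑ K ∈ G.cliqueFinset (r + 1), ∑ v ∈ K, W (K.erase v) v
      = ∑ T ∈ G.cliqueFinset r, ∑ v ∈ ext T, W T v := by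
    rw [← Finset.sum_sigma (G.cliqueFinset (r + 1)) (fun K => K)
        (fun p => W (p.1.erase p.2) p.2),
      ← Finset.sum_sigma (G.cliqueFinset r) ext (fun p => W p.1 p.2)]
    refine Finset.sum_nbij' (fun p => ⟨p.1.erase p.2, p.2⟩) (fun q => ⟨insert q.2 q.1, q.2⟩)
      ?_ ?_ ?_ ?_ ?_
    · rintro ⟨K, v⟩ hp
      rw [Finset.mem_sigma] at hp
      obtain ⟨hK, hv⟩ := hp
      rw [SimpleGraph.mem_cliqueFinset_iff] at hK
      rw [Finset.mem_sigma]
      constructor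
      · rw [SimpleGraph.mem_cliqueFinset_iff]
        refine ⟨hK.1.subset (Finset.erase_subset _ _), ?_⟩
        rw [Finset.card_erase_of_mem hv, hK.2]
        omega
      · rw [hext]
        simp only [Finset.mem_filter, Finset.mem_univ, true_and]
        refine ⟨Finset.notMem_erase _ _, ?_⟩
        rw [Finset.insert_erase hv, SimpleGraph.mem_cliqueFinset_iff]
        exact hK
    · rintro ⟨T, v⟩ hq
      rw [Finset.mem_sigma] at hq
      obtain ⟨hT, hv⟩ := hq
      rw [hext] at hv
      simp only [Finset.mem_filter, Finset.mem_univ, true_and] at hv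
      rw [Finset.mem_sigma]
      exact ⟨hv.2, Finset.mem_insert_self _ _⟩
    · rintro ⟨K, v⟩ hp
      rw [Finset.mem_sigma] at hp
      have h1 : insert v (K.erase v) = K := Finset.insert_erase hp.2
      exact Sigma.ext h1 HEq.rfl
    · rintro ⟨T, v⟩ hq
      rw [Finset.mem_sigma] at hq
      obtain ⟨hT, hv⟩ := hq
      rw [hext] at hv
      simp only [Finset.mem_filter, Finset.mem_univ, true_and] at hv
      have h1 : (insert v T).erase v = T := Finset.erase_insert hv.1
      exact Sigma.ext h1 HEq.rfl
    · rintro ⟨K, v⟩ _; rfl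
  -- Key 3 : bounded out-degree bound per (r)-clique
  have key3 : ∀ T ∈ G.cliqueFinset r, ∑ v ∈ ext T, W T v ≤ r * α := by
    intro T hT
    rw [SimpleGraph.mem_cliqueFinset_iff] at hT
    have : ∑ v ∈ ext T, W T v = ∑ u ∈ T, ((ext T).filter (fun v => f s(u, v) = u)).card := by
      simp only [hW, Finset.card_filter]
      rw [Finset.sum_comm]
    rw [this]
    have hTcard : T.card = r := hT.2
    calc ∑ u ∈ T, ((ext T).filter (fun v => f s(u, v) = u)).card
        ≤ ∑ _u ∈ T, α := by
          refine Finset.sum_le_sum fun u hu => ?_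
          have hmap : ∀ v ∈ (ext T).filter (fun v => f s(u, v) = u),
              s(u, v) ∈ G.edgeFinset.filter (fun e => f e = u) := by
            intro v hvf
            rw [Finset.mem_filter] at hvf
            obtain ⟨hv, hfv⟩ := hvf
            rw [hext] at hv
            simp only [Finset.mem_filter, Finset.mem_univ, true_and] at hv
            obtain ⟨hvT, hins⟩ := hv
            rw [SimpleGraph.mem_cliqueFinset_iff] at hins
            have huv : u ≠ v := fun h => hvT (h ▸ hu)
            have hadj : G.Adj u v := hins.1 (Finset.mem_insert_of_mem hu)
              (Finset.mem_insert_self _ _) huv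
            refine Finset.mem_filter.2 ⟨?_, hfv⟩
            rw [SimpleGraph.mem_edgeFinset, SimpleGraph.mem_edgeSet]; exact hadj
          have hinj : Set.InjOn (fun v => s(u, v))
              ((ext T).filter (fun v => f s(u, v) = u)) := by
            intro v1 h1 v2 h2 heq
            rcases Sym2.eq_iff.1 heq with ⟨_, h⟩ | ⟨h1', h2'⟩
            · exact h
            · exfalso
              simp only [Finset.coe_filter, Set.mem_setOf_eq, hext, Finset.mem_filter,
                Finset.mem_univ, true_and] at h2
              exact h2.1.1 (h1' ▸ hu)
          calc ((ext T).filter (fun v => f s(u, v) = u)).card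
              ≤ (G.edgeFinset.filter (fun e => f e = u)).card :=
                Finset.card_le_card_of_injOn _ hmap hinj
            _ ≤ α := hdeg u
      _ = r * α := by rw [Finset.sum_const, hTcard, smul_eq_mul]
  -- assemble
  have big : r * ((r + 1) * (G.cliqueFinset (r + 1)).card) ≤ r * (2 * α * (G.cliqueFinset r).card) := by
    have e1 : (r + 1) * r * (G.cliqueFinset (r + 1)).card
        = 2 * ∑ T ∈ G.cliqueFinset r, ∑ v ∈ ext T, W T v := by
      calc (r + 1) * r * (G.cliqueFinset (r + 1)).card
          = ∑ _K ∈ G.cliqueFinset (r + 1), (r + 1) * r := by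
            rw [Finset.sum_const, smul_eq_mul, mul_comm]
        _ = ∑ K ∈ G.cliqueFinset (r + 1), 2 * ∑ v ∈ K, W (K.erase v) v :=
            Finset.sum_congr rfl fun K hK => (key1 K hK).symm
        _ = 2 * ∑ K ∈ G.cliqueFinset (r + 1), ∑ v ∈ K, W (K.erase v) v :=
            (Finset.mul_sum _ _ _).symm
        _ = 2 * ∑ T ∈ G.cliqueFinset r, ∑ v ∈ ext T, W T v := by rw [key2]
    have e2 : 2 * ∑ T ∈ G.cliqueFinset r, ∑ v ∈ ext T, W T v
        ≤ 2 * (r * α * (G.cliqueFinset r).card) := by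
      refine Nat.mul_le_mul_left 2 ?_
      calc ∑ T ∈ G.cliqueFinset r, ∑ v ∈ ext T, W T v
          ≤ ∑ _T ∈ G.cliqueFinset r, r * α := Finset.sum_le_sum key3
        _ = r * α * (G.cliqueFinset r).card := by rw [Finset.sum_const, smul_eq_mul, mul_comm]
    calc r * ((r + 1) * (G.cliqueFinset (r + 1)).card)
        = (r + 1) * r * (G.cliqueFinset (r + 1)).card := by ring
      _ ≤ 2 * (r * α * (G.cliqueFinset r).card) := e1 ▸ e2
      _ = r * (2 * α * (G.cliqueFinset r).card) := by ring
  exact Nat.le_of_mul_le_mul_left big hr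

private lemma chain_bound {V : Type*} [Fintype V] [DecidableEq V]
    (G : SimpleGraph V) [DecidableRel G.Adj] (α t : ℕ) (ht : 1 ≤ t)
    (harb : ∀ S : Finset V,
      (G.edgeFinset.filter (fun e => ∀ v ∈ e, v ∈ S)).card ≤ α * S.card) :
    ∀ m : ℕ, (t + m).factorial * (G.cliqueFinset (t + m)).card
      ≤ t.factorial * (G.cliqueFinset t).card * (2 * α) ^ m := by
  intro m
  induction m with
  | zero => simp
  | succ m ih =>
    have hstep := step_bound G α harb (t + m) (le_trans ht (Nat.le_add_right t m))
    calc (t + (m + 1)).factorial * (G.cliqueFinset (t + (m + 1))).card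
        = (t + m).factorial * ((t + m + 1) * (G.cliqueFinset (t + m + 1)).card) := by
          rw [show t + (m + 1) = (t + m) + 1 from rfl, Nat.factorial_succ]; ring
      _ ≤ (t + m).factorial * (2 * α * (G.cliqueFinset (t + m)).card) :=
          Nat.mul_le_mul_left _ hstep
      _ = 2 * α * ((t + m).factorial * (G.cliqueFinset (t + m)).card) := by ring
      _ ≤ 2 * α * (t.factorial * (G.cliqueFinset t).card * (2 * α) ^ m) :=
          Nat.mul_le_mul_left _ ih
      _ = t.factorial * (G.cliqueFinset t).card * (2 * α) ^ (m + 1) := by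
          rw [pow_succ]; ring

/-- If `G` has arboricity at most `α` (every vertex subset `S` spans at most
`α·|S|` edges), then for every `1 ≤ t < k`, `n_k ≤ (t!/k!)·n_t·(2α)^(k-t)`. -/
theorem clique_count_iterated {V : Type*} [Fintype V] [DecidableEq V]
    (G : SimpleGraph V) [DecidableRel G.Adj] (α t k : ℕ) (ht : 1 ≤ t) (htk : t < k)
    (harb : ∀ S : Finset V,
      (G.edgeFinset.filter (fun e => ∀ v ∈ e, v ∈ S)).card ≤ α * S.card) :
    ((G.cliqueFinset k).card : ℝ)
      ≤ ((t.factorial : ℝ) / (k.factorial : ℝ)) * (G.cliqueFinset t).card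
          * (2 * α) ^ (k - t) := by
  have h := chain_bound G α t ht harb (k - t)
  rw [Nat.add_sub_cancel' htk.le] at h
  have hkpos : (0 : ℝ) < (k.factorial : ℝ) := by
    exact_mod_cast k.factorial_pos
  rw [div_mul_eq_mul_div, div_mul_eq_mul_div, le_div_iff₀ hkpos]
  have h' : ((k.factorial * (G.cliqueFinset k).card : ℕ) : ℝ)
      ≤ ((t.factorial * (G.cliqueFinset t).card * (2 * α) ^ (k - t) : ℕ) : ℝ) := by
    exact_mod_cast h
  push_cast at h'
  linarith
end

section
/- Let wt be a legal weight function on ordered cliques of a graph G with respect to clique size k. Then the total weight of all vertices satisfies wt(V) ≤ n_k, the number of k-cliques of G. -/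
/-- An ordered clique in `G`: a list of distinct, pairwise adjacent vertices. -/
def IsOrderedClique {V : Type*} (G : SimpleGraph V) (l : List V) : Prop :=
  l.Nodup ∧ l.Pairwise G.Adj

open Classical in
/-- The total weight of ordered `t`-cliques. -/
noncomputable def ocSum {V : Type*} [Fintype V] (G : SimpleGraph V)
    (wt : List V → ℕ) (t : ℕ) : ℕ :=
  ∑ f ∈ Finset.univ.filter (fun f : Fin t → V => IsOrderedClique G (List.ofFn f)),
    wt (List.ofFn f)

lemma isOrderedClique_append_right {V : Type*} (G : SimpleGraph V) {l₁ l₂ : List V}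
    (h : IsOrderedClique G (l₁ ++ l₂)) : IsOrderedClique G l₁ :=
  ⟨(List.nodup_append.mp h.1).1, (List.pairwise_append.mp h.2).1⟩

lemma ofFn_snoc {V : Type*} {t : ℕ} (g : Fin t → V) (v : V) :
    List.ofFn (Fin.snoc g v) = List.ofFn g ++ [v] := by
  rw [List.ofFn_succ' (Fin.snoc g v)]
  simp [Fin.snoc, List.concat_eq_append]

open Classical in
lemma ocSum_step {V : Type*} [Fintype V] (G : SimpleGraph V) (wt : List V → ℕ) (t : ℕ)
    (h : ∀ f : Fin t → V, IsOrderedClique G (List.ofFn f) →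
      wt (List.ofFn f) =
        ∑ v ∈ Finset.univ.filter (fun v => IsOrderedClique G (List.ofFn f ++ [v])),
          wt (List.ofFn f ++ [v])) :
    ocSum G wt t = ocSum G wt (t + 1) := by
  unfold ocSum
  rw [Finset.sum_congr rfl (fun f hf => h f (Finset.mem_filter.mp hf).2)]
  rw [Finset.sum_sigma']
  refine Finset.sum_nbij' (fun x => Fin.snoc x.1 x.2)
    (fun f => ⟨Fin.init f, f (Fin.last t)⟩) ?_ ?_ ?_ ?_ ?_
  · rintro ⟨g, v⟩ hx
    simp only [Finset.mem_sigma, Finset.mem_filter, Finset.mem_univ, true_and] at hx ⊢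
    rw [ofFn_snoc]
    exact hx.2
  · intro f hf
    simp only [Finset.mem_filter, Finset.mem_univ, true_and] at hf
    simp only [Finset.mem_sigma, Finset.mem_filter, Finset.mem_univ, true_and]
    have h2 : List.ofFn (Fin.init f) ++ [f (Fin.last t)] = List.ofFn f := by
      rw [← ofFn_snoc, Fin.snoc_init_self]
    constructor
    · exact isOrderedClique_append_right G (h2 ▸ hf)
    · rw [h2]; exact hf
  · rintro ⟨g, v⟩ _
    simp [Fin.init_snoc, Fin.snoc_last]
  · intro f _
    exact Fin.snoc_init_self f
  · rintro ⟨g, v⟩ _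
    rw [ofFn_snoc]

open Classical in
theorem legal_weight_total_le {V : Type*} [Fintype V] [DecidableEq V]
    (G : SimpleGraph V) [DecidableRel G.Adj] (k : ℕ) (hk : 1 ≤ k)
    (wt : List V → ℕ)
    -- legality, condition 1: ordered k-cliques get weight 0 or 1
    (h1 : ∀ l : List V, IsOrderedClique G l → l.length = k → wt l ≤ 1)
    -- legality, condition 1 (uniqueness): at most one ordering of an unordered
    -- k-clique has weight 1
    (h1' : ∀ l₁ l₂ : List V, IsOrderedClique G l₁ → IsOrderedClique G l₂ →
      l₁.length = k → l₂.length = k → wt l₁ = 1 → wt l₂ = 1 →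
      l₁.toFinset = l₂.toFinset → l₁ = l₂)
    -- legality, condition 2: the weight of an ordered t-clique (1 ≤ t ≤ k-1) is the sum
    -- of the weights of its single-vertex ordered clique extensions
    (h2 : ∀ l : List V, IsOrderedClique G l → 1 ≤ l.length → l.length < k →
      wt l = ∑ v ∈ Finset.univ.filter (fun v => IsOrderedClique G (l ++ [v])),
        wt (l ++ [v])) :
    ∑ v : V, wt [v] ≤ (G.cliqueFinset k).card := by
  -- Step 1: the vertex sum equals `ocSum G wt 1`.
  have hsingle : ∀ v : V, IsOrderedClique G [v] := fun v =>
    ⟨List.nodup_singleton v, List.pairwise_singleton _ _⟩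
  have h1sum : ∑ v : V, wt [v] = ocSum G wt 1 := by
    unfold ocSum
    rw [Finset.filter_true_of_mem (fun f _ => by simpa using hsingle (f 0))]
    exact (Fintype.sum_equiv (Equiv.funUnique (Fin 1) V)
      (fun f => wt (List.ofFn f)) (fun v => wt [v])
      (fun f => by simp [List.ofFn_succ, Equiv.funUnique])).symm
  -- Step 2: `ocSum G wt t` is constant for `1 ≤ t ≤ k`.
  have hstep : ∀ j : ℕ, 1 + j ≤ k → ocSum G wt 1 = ocSum G wt (1 + j) := by
    intro j
    induction j with
    | zero => intro _; rfl
    | succ n ih =>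
      intro hjk
      have hn : 1 + n ≤ k := by omega
      rw [ih hn, show 1 + (n + 1) = (1 + n) + 1 by omega]
      refine ocSum_step G wt (1 + n) (fun f hf => h2 (List.ofFn f) hf ?_ ?_)
      · simp
      · simp; omega
  have hk' : ocSum G wt 1 = ocSum G wt k := by
    have := hstep (k - 1) (by omega)
    rwa [show 1 + (k - 1) = k by omega] at this
  -- Step 3: `ocSum G wt k ≤ card of k-cliques`.
  rw [h1sum, hk']
  unfold ocSum
  have hle : (∑ f ∈ Finset.univ.filter (fun f : Fin k → V =>
        IsOrderedClique G (List.ofFn f)), wt (List.ofFn f)) ≤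
      (Finset.univ.filter (fun f : Fin k → V =>
        IsOrderedClique G (List.ofFn f) ∧ wt (List.ofFn f) = 1)).card := by
    set A := Finset.univ.filter (fun f : Fin k → V => IsOrderedClique G (List.ofFn f)) with hA
    have key : ∀ f ∈ A, wt (List.ofFn f) ≠ 0 → wt (List.ofFn f) = 1 := by
      intro f hf hne
      simp only [hA, Finset.mem_filter, Finset.mem_univ, true_and] at hf
      have := h1 (List.ofFn f) hf (by simp)
      omega
    calc ∑ f ∈ A, wt (List.ofFn f)
        = ∑ f ∈ A.filter (fun f => wt (List.ofFn f) = 1), wt (List.ofFn f) :=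
          (Finset.sum_filter_of_ne key).symm
      _ = ∑ _f ∈ A.filter (fun f => wt (List.ofFn f) = 1), 1 :=
          Finset.sum_congr rfl (fun f hf => (Finset.mem_filter.mp hf).2)
      _ = (A.filter (fun f => wt (List.ofFn f) = 1)).card := by simp
      _ ≤ _ := le_of_eq (by rw [hA, Finset.filter_filter])
  refine le_trans hle (Finset.card_le_card_of_injOn
    (fun f => (List.ofFn f).toFinset) ?_ ?_)
  · intro f hf
    simp only [Finset.coe_filter, Finset.mem_coe, Set.mem_setOf_eq, Finset.mem_filter, Finset.mem_univ, true_and] at hf ⊢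
    obtain ⟨⟨hnd, hpw⟩, _⟩ := hf
    rw [SimpleGraph.mem_cliqueFinset_iff]
    constructor
    · intro a ha b hb hab
      simp only [List.coe_toFinset, Set.mem_setOf_eq] at ha hb
      haveI := G.symm; exact hpw.forall ha hb hab
    · rw [List.toFinset_card_of_nodup hnd]; simp
  · intro f₁ hf₁ f₂ hf₂ heq
    simp only [Finset.coe_filter, Finset.mem_univ, true_and, Set.mem_setOf_eq] at hf₁ hf₂
    exact List.ofFn_injective (h1' _ _ hf₁.1 hf₂.1 (by simp) (by simp) hf₁.2 hf₂.2 heq)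
end

section
/- For every 1 ≤ i ≤ k−1 and i ≤ j ≤ k−1, the number of k-cliques of G that contain at least one j-costly i-clique, summed over all i ∈ [k−1] and j, is at most 2^{k+1}·γ·ñ_k. More precisely, for fixed i and j, Σ over j-costly i-cliques I of c_k(I) ≤ C(j,i)·γ·ñ_k, where C(j,i) is the binomial coefficient. -/
open Finset

namespace CostlyAux

variable {V : Type*} [Fintype V] [DecidableEq V]

/-- The (real-valued) minimum degree over a finset of vertices, as an `sInf`. -/
noncomputable def rmin (G : SimpleGraph V) [DecidableRel G.Adj] (J : Finset V) : ℝ :=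
  sInf ((fun v => (G.degree v : ℝ)) '' (J : Set V))

variable (G : SimpleGraph V) [DecidableRel G.Adj]

lemma rmin_nonneg (J : Finset V) : 0 ≤ rmin G J := by
  apply Real.sInf_nonneg
  rintro x ⟨v, -, rfl⟩
  positivity

lemma rmin_exists {J : Finset V} (h : J.Nonempty) : ∃ v ∈ J, rmin G J = G.degree v := by
  have hne : ((fun v => (G.degree v : ℝ)) '' (J : Set V)).Nonempty :=
    (Finset.coe_nonempty.mpr h).image _
  have hfin : ((fun v => (G.degree v : ℝ)) '' (J : Set V)).Finite :=
    (J.finite_toSet.image _)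
  obtain ⟨v, hv, hveq⟩ := hne.csInf_mem hfin
  exact ⟨v, hv, hveq.symm⟩

lemma rmin_le {J : Finset V} {v : V} (hv : v ∈ J) : rmin G J ≤ G.degree v :=
  csInf_le ((J.finite_toSet.image _).bddBelow) ⟨v, hv, rfl⟩

lemma rmin_mono {S T : Finset V} (hST : S ⊆ T) (hS : S.Nonempty) :
    rmin G T ≤ rmin G S := by
  obtain ⟨v, hv, heq⟩ := rmin_exists G hS
  rw [heq]
  exact rmin_le G (hST hv)

lemma rmin_singleton (v : V) : rmin G {v} = G.degree v := by
  unfold rmin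
  rw [Finset.coe_singleton, Set.image_singleton, csInf_singleton]

/-- From the arboricity-type hypothesis, produce an "orientation": a choice of a tail
vertex for each edge such that every vertex is the tail of at most `α` edges. -/
lemma exists_tail (α : ℕ)
    (harb : ∀ S : Finset V,
      (G.edgeFinset.filter (fun e => ∀ v ∈ e, v ∈ S)).card ≤ α * (S.card - 1)) :
    ∃ tail : Sym2 V → V, (∀ e ∈ G.edgeFinset, tail e ∈ e) ∧
      ∀ v : V, (G.edgeFinset.filter (fun e => tail e = v)).card ≤ α := by
  classical
  set ep : Sym2 V → Finset V := fun e => univ.filter (· ∈ e) with hep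
  have hmem_ep : ∀ (e : Sym2 V) (v : V), v ∈ ep e ↔ v ∈ e := by
    intro e v; simp [hep]
  set t : {e // e ∈ G.edgeFinset} → Finset (V × Fin α) := fun e => (ep e.1) ×ˢ univ with ht
  have hall : ∀ s : Finset {e // e ∈ G.edgeFinset}, s.card ≤ (s.biUnion t).card := by
    intro s
    set W : Finset V := s.biUnion (fun e => ep e.1) with hW
    have h1 : s.biUnion t = W ×ˢ (univ : Finset (Fin α)) := by
      ext ⟨v, a⟩
      simp only [ht, hW, Finset.mem_biUnion, Finset.mem_product, Finset.mem_univ, and_true]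
    have h2 : s.card ≤ (G.edgeFinset.filter (fun e => ∀ v ∈ e, v ∈ W)).card := by
      apply Finset.card_le_card_of_injOn (fun e => e.1)
      · intro e he
        simp only [Finset.mem_coe, Finset.mem_filter]
        refine ⟨e.2, ?_⟩
        intro v hv
        exact Finset.mem_biUnion.mpr ⟨e, he, (hmem_ep _ _).mpr hv⟩
      · intro a _ b _ h
        exact Subtype.ext h
    calc s.card ≤ α * (W.card - 1) := le_trans h2 (harb W)
      _ ≤ α * W.card := Nat.mul_le_mul_left _ (Nat.sub_le _ _)
      _ = W.card * α := Nat.mul_comm _ _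
      _ = (W ×ˢ (univ : Finset (Fin α))).card := by
          rw [Finset.card_product, Finset.card_univ, Fintype.card_fin]
      _ = (s.biUnion t).card := by rw [h1]
  obtain ⟨f, hfinj, hft⟩ := (Finset.all_card_le_biUnion_card_iff_existsInjective' t).mp hall
  refine ⟨fun e => if h : e ∈ G.edgeFinset then (f ⟨e, h⟩).1 else (Quot.out e).1, ?_, ?_⟩
  · intro e he
    simp only [dif_pos he]
    have h1 := (Finset.mem_product.mp (hft ⟨e, he⟩)).1
    exact (hmem_ep _ _).mp h1
  · intro v
    have hcard := (Fintype.card_coe (G.edgeFinset.filter (fun e =>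
      (if h : e ∈ G.edgeFinset then (f ⟨e, h⟩).1 else (Quot.out e).1) = v))).symm
    rw [hcard]
    have hle : Fintype.card {e // e ∈ G.edgeFinset.filter (fun e =>
        (if h : e ∈ G.edgeFinset then (f ⟨e, h⟩).1 else (Quot.out e).1) = v)}
        ≤ Fintype.card (Fin α) := by
      apply Fintype.card_le_of_injective
        (fun x => (f ⟨x.1, (Finset.mem_filter.mp x.2).1⟩).2)
      intro x y hxy
      have hx := Finset.mem_filter.mp x.2
      have hy := Finset.mem_filter.mp y.2
      have hx2 : (f ⟨x.1, hx.1⟩).1 = v := by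
        have h' := hx.2
        simp only [dif_pos hx.1] at h'
        exact h'
      have hy2 : (f ⟨y.1, hy.1⟩).1 = v := by
        have h' := hy.2
        simp only [dif_pos hy.1] at h'
        exact h'
      have hfeq : f ⟨x.1, hx.1⟩ = f ⟨y.1, hy.1⟩ := by
        apply Prod.ext
        · rw [hx2, hy2]
        · exact hxy
      have h12 : (⟨x.1, hx.1⟩ : {e // e ∈ G.edgeFinset})
          = ⟨y.1, hy.1⟩ := hfinj hfeq
      exact Subtype.ext (Subtype.mk_eq_mk.mp h12)
    simpa [Fintype.card_fin] using hle

/-- The key charging step: the sum of `rmin` over `(j+1)`-cliques is at most `α` times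
the sum over `j`-cliques. -/
lemma charging (α j : ℕ) (hj : 1 ≤ j) (tail : Sym2 V → V)
    (ht1 : ∀ e ∈ G.edgeFinset, tail e ∈ e)
    (ht2 : ∀ v : V, (G.edgeFinset.filter (fun e => tail e = v)).card ≤ α) :
    ∑ T ∈ G.cliqueFinset (j + 1), rmin G T
      ≤ (α : ℝ) * ∑ T' ∈ G.cliqueFinset j, rmin G T' := by
  classical
  by_cases hne : G.cliqueFinset (j + 1) = ∅
  · rw [hne, Finset.sum_empty]
    exact mul_nonneg (by positivity) (Finset.sum_nonneg fun T _ => rmin_nonneg G T)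
  obtain ⟨T₀, hT₀⟩ := Finset.nonempty_iff_ne_empty.mpr hne
  have hT₀card : T₀.card = j + 1 := (SimpleGraph.mem_cliqueFinset_iff.mp hT₀).card_eq
  obtain ⟨v₀, -⟩ := Finset.card_pos.mp (show 0 < T₀.card by omega)
  letI : LinearOrder V := LinearOrder.lift' (Fintype.equivFin V) (Fintype.equivFin V).injective
  obtain ⟨anc, hancmem, hancstab⟩ :
      ∃ anc : Finset V → V, (∀ S : Finset V, S.Nonempty → anc S ∈ S) ∧
        (∀ S T : Finset V, S ⊆ T → anc T ∈ S → anc S = anc T) := by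
    refine ⟨fun S => if h : S.Nonempty then S.min' h else v₀, fun S hS => ?_,
      fun S T hST hmem => ?_⟩
    · show (if h : S.Nonempty then S.min' h else v₀) ∈ S
      rw [dif_pos hS]
      exact S.min'_mem hS
    · have hS : S.Nonempty := ⟨_, hmem⟩
      have hT : T.Nonempty := hS.mono hST
      have hmem' : T.min' hT ∈ S := by
        have h' : (if h : T.Nonempty then T.min' h else v₀) ∈ S := hmem
        rwa [dif_pos hT] at h'
      show (if h : S.Nonempty then S.min' h else v₀)
          = (if h : T.Nonempty then T.min' h else v₀)
      rw [dif_pos hS, dif_pos hT]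
      exact le_antisymm (S.min'_le _ hmem') (T.min'_le _ (hST (S.min'_mem hS)))
  obtain ⟨xsel, main⟩ :
      ∃ xsel : Finset V → V, ∀ T ∈ G.cliqueFinset (j + 1),
        xsel T ∈ T ∧ T.erase (xsel T) ∈ G.cliqueFinset j ∧ (T.erase (xsel T)).Nonempty ∧
        anc (T.erase (xsel T)) ≠ xsel T ∧ G.Adj (anc (T.erase (xsel T))) (xsel T) ∧
        tail s(anc (T.erase (xsel T)), xsel T) = anc (T.erase (xsel T)) := by
    refine ⟨fun T => if h : ((T.erase (anc T)).filter
        (fun x => tail s(anc T, x) = anc T)).Nonempty then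
        ((T.erase (anc T)).filter (fun x => tail s(anc T, x) = anc T)).min' h
      else anc T, ?_⟩
    intro T hT
    obtain ⟨hclique, hcard⟩ := SimpleGraph.mem_cliqueFinset_iff.mp hT
    have hTne : T.Nonempty := Finset.card_pos.mp (by omega)
    have hancT : anc T ∈ T := hancmem T hTne
    have hsub : ∀ x : V, x ∈ T → (T.erase x) ⊆ T := fun x _ => Finset.erase_subset _ _
    have hclique' : ∀ x : V, x ∈ T → T.erase x ∈ G.cliqueFinset j := by
      intro x hx
      refine SimpleGraph.mem_cliqueFinset_iff.mpr
        ⟨hclique.subset (Finset.coe_subset.mpr (hsub x hx)), ?_⟩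
      rw [Finset.card_erase_of_mem hx, hcard]
      omega
    have hne' : ∀ x : V, x ∈ T → (T.erase x).Nonempty := by
      intro x hx
      apply Finset.card_pos.mp
      rw [Finset.card_erase_of_mem hx, hcard]
      omega
    by_cases h : ((T.erase (anc T)).filter
        (fun x => tail s(anc T, x) = anc T)).Nonempty
    · simp only [dif_pos h]
      set x := ((T.erase (anc T)).filter
        (fun x => tail s(anc T, x) = anc T)).min' h with hxdef
      have hxO : x ∈ (T.erase (anc T)).filter
          (fun x => tail s(anc T, x) = anc T) := Finset.min'_mem _ h
      obtain ⟨hx1, hx2⟩ := Finset.mem_filter.mp hxO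
      have hxne : x ≠ anc T := (Finset.mem_erase.mp hx1).1
      have hxT : x ∈ T := Finset.mem_of_mem_erase hx1
      have hancφ : anc (T.erase x) = anc T := by
        apply hancstab _ _ (hsub x hxT)
        exact Finset.mem_erase.mpr ⟨fun hh => hxne hh.symm, hancT⟩
      refine ⟨hxT, hclique' x hxT, hne' x hxT, ?_, ?_, ?_⟩
      · rw [hancφ]
        exact fun hh => hxne hh.symm
      · rw [hancφ]
        exact hclique (Finset.mem_coe.mpr hancT) (Finset.mem_coe.mpr hxT)
          (fun hh => hxne hh.symm)
      · rw [hancφ]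
        exact hx2
    · simp only [dif_neg h]
      have haφ : anc (T.erase (anc T)) ∈ T.erase (anc T) :=
        hancmem _ (hne' _ hancT)
      have haT : anc (T.erase (anc T)) ∈ T := Finset.mem_of_mem_erase haφ
      have hane : anc (T.erase (anc T)) ≠ anc T := (Finset.mem_erase.mp haφ).1
      have hadj : G.Adj (anc (T.erase (anc T))) (anc T) :=
        hclique (Finset.mem_coe.mpr haT) (Finset.mem_coe.mpr hancT) hane
      refine ⟨hancT, hclique' _ hancT, hne' _ hancT, hane, hadj, ?_⟩
      have hedge : s(anc (T.erase (anc T)), anc T) ∈ G.edgeFinset :=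
        SimpleGraph.mem_edgeFinset.mpr hadj
      have htl := ht1 _ hedge
      rw [Sym2.mem_iff] at htl
      rcases htl with h1 | h2
      · exact h1
      · exfalso
        apply h
        refine ⟨anc (T.erase (anc T)), Finset.mem_filter.mpr ⟨haφ, ?_⟩⟩
        rw [Sym2.eq_swap]
        exact h2
  have hmaps : ∀ T ∈ G.cliqueFinset (j + 1), T.erase (xsel T) ∈ G.cliqueFinset j :=
    fun T hT => (main T hT).2.1
  have fiber : ∀ T' ∈ G.cliqueFinset j,
      ((G.cliqueFinset (j + 1)).filter (fun T => T.erase (xsel T) = T')).card ≤ α := by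
    intro T' hT'
    refine le_trans
      (Finset.card_le_card_of_injOn (fun T => s(anc T', xsel T)) ?_ ?_) (ht2 (anc T'))
    · intro T hTmem
      obtain ⟨hT, hφT⟩ := Finset.mem_filter.mp hTmem
      obtain ⟨-, -, -, hne', hadj, htail⟩ := main T hT
      rw [hφT] at hadj htail
      exact Finset.mem_filter.mpr ⟨SimpleGraph.mem_edgeFinset.mpr hadj, htail⟩
    · intro T₁ h₁ T₂ h₂ heq
      rw [Finset.mem_coe, Finset.mem_filter] at h₁ h₂
      obtain ⟨hT₁, hφ₁⟩ := h₁
      obtain ⟨hT₂, hφ₂⟩ := h₂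
      have hx12 : xsel T₁ = xsel T₂ := Sym2.congr_right.mp heq
      have e₁ : T₁ = insert (xsel T₁) T' := by
        conv_lhs => rw [← Finset.insert_erase (main T₁ hT₁).1]
        rw [hφ₁]
      have e₂ : T₂ = insert (xsel T₂) T' := by
        conv_lhs => rw [← Finset.insert_erase (main T₂ hT₂).1]
        rw [hφ₂]
      rw [e₁, e₂, hx12]
  calc ∑ T ∈ G.cliqueFinset (j + 1), rmin G T
      ≤ ∑ T ∈ G.cliqueFinset (j + 1), rmin G (T.erase (xsel T)) := by
        apply Finset.sum_le_sum
        intro T hT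
        exact rmin_mono G (Finset.erase_subset _ _) (main T hT).2.2.1
    _ = ∑ T' ∈ G.cliqueFinset j,
          ∑ T ∈ (G.cliqueFinset (j + 1)).filter (fun T => T.erase (xsel T) = T'),
            rmin G (T.erase (xsel T)) :=
        (Finset.sum_fiberwise_of_maps_to hmaps _).symm
    _ = ∑ T' ∈ G.cliqueFinset j,
          (((G.cliqueFinset (j + 1)).filter
            (fun T => T.erase (xsel T) = T')).card : ℝ) * rmin G T' := by
        apply Finset.sum_congr rfl
        intro T' _
        rw [Finset.sum_congr rfl (fun T hT => by rw [(Finset.mem_filter.mp hT).2]),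
          Finset.sum_const, nsmul_eq_mul]
    _ ≤ ∑ T' ∈ G.cliqueFinset j, (α : ℝ) * rmin G T' := by
        apply Finset.sum_le_sum
        intro T' hT'
        exact mul_le_mul_of_nonneg_right (by exact_mod_cast fiber T' hT') (rmin_nonneg G T')
    _ = (α : ℝ) * ∑ T' ∈ G.cliqueFinset j, rmin G T' := by rw [Finset.mul_sum]

/-- Key lemma: the sum of minimum degrees over all `j`-cliques is at most `2mα^(j-1)`. -/
lemma sum_rmin_le (α : ℕ)
    (harb : ∀ S : Finset V,
      (G.edgeFinset.filter (fun e => ∀ v ∈ e, v ∈ S)).card ≤ α * (S.card - 1)) :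
    ∀ j : ℕ, 1 ≤ j →
      ∑ T ∈ G.cliqueFinset j, rmin G T
        ≤ 2 * (G.edgeFinset.card : ℝ) * (α : ℝ) ^ (j - 1) := by
  obtain ⟨tail, ht1, ht2⟩ := exists_tail G α harb
  intro j hj
  induction j, hj using Nat.le_induction with
  | base =>
      have h1 : G.cliqueFinset 1 = univ.image (fun v => ({v} : Finset V)) := by
        ext T
        simp only [SimpleGraph.mem_cliqueFinset_iff, SimpleGraph.isNClique_one,
          Finset.mem_image, Finset.mem_univ, true_and]
        constructor
        · rintro ⟨a, rfl⟩; exact ⟨a, rfl⟩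
        · rintro ⟨a, rfl⟩; exact ⟨a, rfl⟩
      rw [h1, Finset.sum_image (fun a _ b _ h => Finset.singleton_injective h)]
      simp only [rmin_singleton]
      have h2 : ∑ v : V, (G.degree v : ℝ) = ((∑ v : V, G.degree v : ℕ) : ℝ) := by
        push_cast
        rfl
      rw [h2, SimpleGraph.sum_degrees_eq_twice_card_edges]
      norm_num
  | succ n hn ih =>
      have hch := charging G α n hn tail ht1 ht2
      have hnn : n - 1 + 1 = n := by omega
      calc ∑ T ∈ G.cliqueFinset (n + 1), rmin G T
          ≤ (α : ℝ) * ∑ T' ∈ G.cliqueFinset n, rmin G T' := hch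
        _ ≤ (α : ℝ) * (2 * (G.edgeFinset.card : ℝ) * (α : ℝ) ^ (n - 1)) :=
            mul_le_mul_of_nonneg_left ih (by positivity)
        _ = 2 * (G.edgeFinset.card : ℝ) * ((α : ℝ) ^ (n - 1) * (α : ℝ)) := by ring
        _ = 2 * (G.edgeFinset.card : ℝ) * (α : ℝ) ^ (n + 1 - 1) := by
            rw [← pow_succ, hnn]
            simp

/-- Each `j`-clique contains exactly `C(j,i)` `i`-cliques. -/
lemma count_subcliques {i j : ℕ} {J : Finset V} (hJ : J ∈ G.cliqueFinset j) :
    ((G.cliqueFinset i).filter (fun I => I ⊆ J)).card = j.choose i := by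
  classical
  obtain ⟨hclique, hcard⟩ := SimpleGraph.mem_cliqueFinset_iff.mp hJ
  have h : (G.cliqueFinset i).filter (fun I => I ⊆ J) = J.powersetCard i := by
    ext I
    simp only [Finset.mem_filter, Finset.mem_powersetCard,
      SimpleGraph.mem_cliqueFinset_iff]
    constructor
    · rintro ⟨⟨-, hc⟩, hsub⟩
      exact ⟨hsub, hc⟩
    · rintro ⟨hsub, hc⟩
      exact ⟨⟨hclique.subset (Finset.coe_subset.mpr hsub), hc⟩, hsub⟩
  rw [h, Finset.card_powersetCard, hcard]

lemma choose_sum_le (n : ℕ) :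
    ∑ i ∈ Finset.Icc 1 n, ∑ j ∈ Finset.Icc i n, j.choose i ≤ 2 ^ (n + 2) := by
  have hswap : ∑ i ∈ Finset.Icc 1 n, ∑ j ∈ Finset.Icc i n, j.choose i
      = ∑ j ∈ Finset.Icc 1 n, ∑ i ∈ Finset.Icc 1 j, j.choose i := by
    apply Finset.sum_comm'
    intro x y
    simp only [Finset.mem_Icc]
    omega
  rw [hswap]
  have hgeo : ∀ m : ℕ, ∑ j ∈ Finset.range m, 2 ^ j < 2 ^ m := by
    intro m
    induction m with
    | zero => simp
    | succ p ih =>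
        rw [Finset.sum_range_succ, pow_succ]
        omega
  calc ∑ j ∈ Finset.Icc 1 n, ∑ i ∈ Finset.Icc 1 j, j.choose i
      ≤ ∑ j ∈ Finset.Icc 1 n, 2 ^ j := by
        apply Finset.sum_le_sum
        intro j _
        calc ∑ i ∈ Finset.Icc 1 j, j.choose i
            ≤ ∑ i ∈ Finset.range (j + 1), j.choose i := by
              apply Finset.sum_le_sum_of_subset
              intro x hx
              simp only [Finset.mem_Icc] at hx
              simp only [Finset.mem_range]
              omega
          _ = 2 ^ j := Nat.sum_range_choose j
    _ ≤ ∑ j ∈ Finset.range (n + 2), 2 ^ j := by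
        apply Finset.sum_le_sum_of_subset
        intro x hx
        simp only [Finset.mem_Icc] at hx
        simp only [Finset.mem_range]
        omega
    _ ≤ 2 ^ (n + 2) := le_of_lt (hgeo (n + 2))

end CostlyAux

/- STATEMENT 6: In a graph with `m` edges and arboricity at most `α`, for every
`1 ≤ i ≤ j ≤ k-1`, the sum of `c_k(I)` over all `j`-costly `i`-cliques `I` is at most
`C(j,i)·γ·ñ_k`; summing over all `i,j`, the number of `k`-cliques containing some
`j`-costly `i`-clique is at most `2^(k+1)·γ·ñ_k`.  Here an `i`-clique `I` is `j`-costly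
(w.r.t. `ñ_k` and `γ`) if `d(C_j(I))/c_k(I) > 2mα^(j-1)/(γ·ñ_k)`, i.e. (clearing
denominators) `2mα^(j-1)·c_k(I) < γ·ñ_k·d(C_j(I))`, where `c_k(I)` is the number of
`k`-cliques containing `I` and `d(C_j(I))` is the sum, over `j`-cliques `J ⊇ I`, of the
degree of a minimum-degree vertex of `J`. -/
open Classical in
theorem costly_cliques_bound {V : Type*} [Fintype V] [DecidableEq V]
    (G : SimpleGraph V) [DecidableRel G.Adj] (α k : ℕ) (hk : 1 ≤ k)
    (γ ntk : ℝ) (hγ : 0 < γ) (hntk : 0 < ntk)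
    (harb : ∀ S : Finset V,
      (G.edgeFinset.filter (fun e => ∀ v ∈ e, v ∈ S)).card ≤ α * (S.card - 1)) :
    (∀ i j : ℕ, 1 ≤ i → i ≤ j → j ≤ k - 1 →
      ∑ I ∈ (G.cliqueFinset i).filter (fun I =>
          2 * (G.edgeFinset.card : ℝ) * (α : ℝ) ^ (j - 1)
              * (((G.cliqueFinset k).filter (fun C => I ⊆ C)).card : ℝ)
            < γ * ntk * ∑ J ∈ (G.cliqueFinset j).filter (fun J => I ⊆ J),
                (sInf ((fun v => G.degree v) '' (J : Set V)) : ℝ)),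
        (((G.cliqueFinset k).filter (fun C => I ⊆ C)).card : ℝ)
        ≤ (j.choose i : ℝ) * γ * ntk) ∧
    ∑ i ∈ Finset.Icc 1 (k - 1), ∑ j ∈ Finset.Icc i (k - 1),
      ∑ I ∈ (G.cliqueFinset i).filter (fun I =>
          2 * (G.edgeFinset.card : ℝ) * (α : ℝ) ^ (j - 1)
              * (((G.cliqueFinset k).filter (fun C => I ⊆ C)).card : ℝ)
            < γ * ntk * ∑ J ∈ (G.cliqueFinset j).filter (fun J => I ⊆ J),
                (sInf ((fun v => G.degree v) '' (J : Set V)) : ℝ)),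
        (((G.cliqueFinset k).filter (fun C => I ⊆ C)).card : ℝ)
      ≤ 2 ^ (k + 1) * γ * ntk := by
  have key : ∀ i j : ℕ, 1 ≤ i → i ≤ j → j ≤ k - 1 →
      ∑ I ∈ (G.cliqueFinset i).filter (fun I =>
          2 * (G.edgeFinset.card : ℝ) * (α : ℝ) ^ (j - 1)
              * (((G.cliqueFinset k).filter (fun C => I ⊆ C)).card : ℝ)
            < γ * ntk * ∑ J ∈ (G.cliqueFinset j).filter (fun J => I ⊆ J),
                (sInf ((fun v => G.degree v) '' (J : Set V)) : ℝ)),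
        (((G.cliqueFinset k).filter (fun C => I ⊆ C)).card : ℝ)
        ≤ (j.choose i : ℝ) * γ * ntk := by
    intro i j hi hij hjk
    have hj1 : 1 ≤ j := le_trans hi hij
    have hwnn : ∀ I : Finset V,
        0 ≤ ∑ J ∈ (G.cliqueFinset j).filter (fun J => I ⊆ J), CostlyAux.rmin G J :=
      fun I => Finset.sum_nonneg fun J _ => CostlyAux.rmin_nonneg G J
    have hsum_all : ∑ I ∈ G.cliqueFinset i,
        ∑ J ∈ (G.cliqueFinset j).filter (fun J => I ⊆ J), CostlyAux.rmin G J
        = (j.choose i : ℝ) * ∑ J ∈ G.cliqueFinset j, CostlyAux.rmin G J := by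
      simp only [Finset.sum_filter]
      rw [Finset.sum_comm]
      have hcongr : ∀ J ∈ G.cliqueFinset j,
          (∑ I ∈ G.cliqueFinset i, if I ⊆ J then CostlyAux.rmin G J else 0)
          = (j.choose i : ℝ) * CostlyAux.rmin G J := by
        intro J hJ
        rw [← Finset.sum_filter, Finset.sum_const, nsmul_eq_mul,
          CostlyAux.count_subcliques G hJ]
      rw [Finset.sum_congr rfl hcongr, ← Finset.mul_sum]
    have hL1 := CostlyAux.sum_rmin_le G α harb j hj1
    by_cases hDpos : 0 < 2 * (G.edgeFinset.card : ℝ) * (α : ℝ) ^ (j - 1)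
    · -- positive case
      have hchain :
          (2 * (G.edgeFinset.card : ℝ) * (α : ℝ) ^ (j - 1)) *
            ∑ I ∈ (G.cliqueFinset i).filter (fun I =>
                2 * (G.edgeFinset.card : ℝ) * (α : ℝ) ^ (j - 1)
                    * (((G.cliqueFinset k).filter (fun C => I ⊆ C)).card : ℝ)
                  < γ * ntk * ∑ J ∈ (G.cliqueFinset j).filter (fun J => I ⊆ J),
                      (sInf ((fun v => G.degree v) '' (J : Set V)) : ℝ)),
              (((G.cliqueFinset k).filter (fun C => I ⊆ C)).card : ℝ)
          ≤ (2 * (G.edgeFinset.card : ℝ) * (α : ℝ) ^ (j - 1)) *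
              ((j.choose i : ℝ) * γ * ntk) := by
        rw [Finset.mul_sum]
        calc ∑ I ∈ (G.cliqueFinset i).filter _,
              (2 * (G.edgeFinset.card : ℝ) * (α : ℝ) ^ (j - 1)) *
                (((G.cliqueFinset k).filter (fun C => I ⊆ C)).card : ℝ)
            ≤ ∑ I ∈ (G.cliqueFinset i).filter _,
                γ * ntk * ∑ J ∈ (G.cliqueFinset j).filter (fun J => I ⊆ J),
                  CostlyAux.rmin G J := by
              apply Finset.sum_le_sum
              intro I hI
              exact le_of_lt (Finset.mem_filter.mp hI).2
          _ = γ * ntk * ∑ I ∈ (G.cliqueFinset i).filter _,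
                ∑ J ∈ (G.cliqueFinset j).filter (fun J => I ⊆ J),
                  CostlyAux.rmin G J := by rw [Finset.mul_sum]
          _ ≤ γ * ntk * ∑ I ∈ G.cliqueFinset i,
                ∑ J ∈ (G.cliqueFinset j).filter (fun J => I ⊆ J),
                  CostlyAux.rmin G J := by
              apply mul_le_mul_of_nonneg_left _ (by positivity)
              exact Finset.sum_le_sum_of_subset_of_nonneg
                (Finset.filter_subset _ _) (fun I _ _ => hwnn I)
          _ = γ * ntk * ((j.choose i : ℝ) * ∑ J ∈ G.cliqueFinset j, CostlyAux.rmin G J) := by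
              rw [hsum_all]
          _ ≤ γ * ntk * ((j.choose i : ℝ) *
                (2 * (G.edgeFinset.card : ℝ) * (α : ℝ) ^ (j - 1))) := by
              apply mul_le_mul_of_nonneg_left _ (by positivity)
              exact mul_le_mul_of_nonneg_left hL1 (by positivity)
          _ = (2 * (G.edgeFinset.card : ℝ) * (α : ℝ) ^ (j - 1)) *
                ((j.choose i : ℝ) * γ * ntk) := by ring
      exact le_of_mul_le_mul_left hchain hDpos
    · -- degenerate case : 2mα^(j-1) = 0
      have hD0 : (2 * (G.edgeFinset.card : ℝ) * (α : ℝ) ^ (j - 1)) = 0 :=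
        le_antisymm (not_lt.mp hDpos) (by positivity)
      have hzero : ∀ J ∈ G.cliqueFinset j, CostlyAux.rmin G J = 0 := by
        intro J hJ
        have h1 : ∑ T ∈ G.cliqueFinset j, CostlyAux.rmin G T ≤ 0 := by
          rw [← hD0]; exact hL1
        exact le_antisymm
          (le_trans (Finset.single_le_sum
            (fun T _ => CostlyAux.rmin_nonneg G T) hJ) h1)
          (CostlyAux.rmin_nonneg G J)
      have hempty : (G.cliqueFinset i).filter (fun I =>
          2 * (G.edgeFinset.card : ℝ) * (α : ℝ) ^ (j - 1)
              * (((G.cliqueFinset k).filter (fun C => I ⊆ C)).card : ℝ)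
            < γ * ntk * ∑ J ∈ (G.cliqueFinset j).filter (fun J => I ⊆ J),
                (sInf ((fun v => G.degree v) '' (J : Set V)) : ℝ)) = ∅ := by
        rw [Finset.filter_eq_empty_iff]
        intro I _
        have hw0 : ∑ J ∈ (G.cliqueFinset j).filter (fun J => I ⊆ J),
            (sInf ((fun v => G.degree v) '' (J : Set V)) : ℝ) = 0 :=
          Finset.sum_eq_zero (fun J hJ => hzero J (Finset.mem_filter.mp hJ).1)
        intro hcond
        rw [hD0, zero_mul, hw0, mul_zero] at hcond
        exact lt_irrefl 0 hcond
      rw [hempty, Finset.sum_empty]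
      positivity
  refine ⟨key, ?_⟩
  calc ∑ i ∈ Finset.Icc 1 (k - 1), ∑ j ∈ Finset.Icc i (k - 1),
        ∑ I ∈ (G.cliqueFinset i).filter (fun I =>
            2 * (G.edgeFinset.card : ℝ) * (α : ℝ) ^ (j - 1)
                * (((G.cliqueFinset k).filter (fun C => I ⊆ C)).card : ℝ)
              < γ * ntk * ∑ J ∈ (G.cliqueFinset j).filter (fun J => I ⊆ J),
                  (sInf ((fun v => G.degree v) '' (J : Set V)) : ℝ)),
          (((G.cliqueFinset k).filter (fun C => I ⊆ C)).card : ℝ)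
      ≤ ∑ i ∈ Finset.Icc 1 (k - 1), ∑ j ∈ Finset.Icc i (k - 1),
          (j.choose i : ℝ) * γ * ntk := by
        apply Finset.sum_le_sum
        intro i hi
        apply Finset.sum_le_sum
        intro j hj
        obtain ⟨hi1, hik⟩ := Finset.mem_Icc.mp hi
        obtain ⟨hij, hjk⟩ := Finset.mem_Icc.mp hj
        exact key i j hi1 hij hjk
    _ = (∑ i ∈ Finset.Icc 1 (k - 1), ∑ j ∈ Finset.Icc i (k - 1),
          (j.choose i : ℝ)) * (γ * ntk) := by
        rw [Finset.sum_mul]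
        apply Finset.sum_congr rfl
        intro i _
        rw [Finset.sum_mul]
        apply Finset.sum_congr rfl
        intro j _
        ring
    _ ≤ (2 ^ (k + 1) : ℝ) * (γ * ntk) := by
        apply mul_le_mul_of_nonneg_right _ (by positivity)
        have hc := CostlyAux.choose_sum_le (k - 1)
        have hk' : k - 1 + 2 = k + 1 := by omega
        rw [hk'] at hc
        calc ∑ i ∈ Finset.Icc 1 (k - 1), ∑ j ∈ Finset.Icc i (k - 1), (j.choose i : ℝ)
            = ((∑ i ∈ Finset.Icc 1 (k - 1), ∑ j ∈ Finset.Icc i (k - 1),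
                j.choose i : ℕ) : ℝ) := by push_cast; rfl
          _ ≤ ((2 ^ (k + 1) : ℕ) : ℝ) := by exact_mod_cast hc
          _ = (2 ^ (k + 1) : ℝ) := by push_cast; rfl
    _ = 2 ^ (k + 1) * γ * ntk := by ring
end
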